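/- König's Lemma via local embeddability: if T₁ and T₂ are trees with ω levels, all levels finite, and for every n the union of the first n levels of T₁ embeds as a subtree into the union of the first n levels of T₂, then T₁ embeds as a subtree into T₂ (i.e., there is an injective order-embedding of T₁ into T₂ whose image is downward closed within the image's levels, preserving levels). -/

import Mathlib

/-- A well-founded tree order of height at most ω: a partial order with a least
element (root) in which the set of predecessors of every element is finite and
linearly ordered. -/
structure TreeOrder (T : Type*) where
  le : T → T → Prop
  refl : ∀ x, le x x
  antisymm : ∀ x y, le x y → le y x → x = y
  trans : ∀ x y z, le x y → le y z → le x z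
  root : T
  root_le : ∀ x, le root x
  pred_finite : ∀ x, {y | le y x}.Finite
  pred_chain : ∀ x y z, le y x → le z x → le y z ∨ le z y

namespace TreeOrder

variable {T : Type*} (t : TreeOrder T)

/-- The strict order associated to a tree order. -/
def lt (x y : T) : Prop := t.le x y ∧ x ≠ y

/-- The `n`-th level: elements with exactly `n` strict predecessors. -/
def level (n : ℕ) : Set T := {x | {y | t.lt y x}.ncard = n}

/-- The tree has ω levels: every level is nonempty. -/
def OmegaLevels : Prop := ∀ n, (t.level n).Nonempty

/-- All levels are finite. -/
def FiniteLevels : Prop := ∀ n, (t.level n).Finite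

/-- No leaves: every element has a strict successor. -/
def NoLeaves : Prop := ∀ x, ∃ y, t.lt x y

/-- `y` is an immediate successor of `x`. -/
def ImmSucc (x y : T) : Prop := t.lt x y ∧ ¬ ∃ z, t.lt x z ∧ t.lt z y

/-- Union of the first `n` levels. -/
def below (n : ℕ) : Set T := {x | ∃ k < n, x ∈ t.level k}

end TreeOrder

namespace TreeOrder

variable {T : Type*} (t : TreeOrder T)

/-- The level of an element. -/
noncomputable def lvl (x : T) : ℕ := {y | t.lt y x}.ncard

lemma predlt_finite (x : T) : {y | t.lt y x}.Finite :=
  (t.pred_finite x).subset (fun _ hy => hy.1)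

lemma mem_level_lvl (x : T) : x ∈ t.level (t.lvl x) := rfl

lemma level_eq_lvl {x : T} {k : ℕ} (h : x ∈ t.level k) : t.lvl x = k := h

lemma mem_below_iff {x : T} {n : ℕ} : x ∈ t.below n ↔ t.lvl x < n := by
  constructor
  · rintro ⟨k, hk, hx⟩; rw [t.level_eq_lvl hx]; exact hk
  · intro h; exact ⟨t.lvl x, h, rfl⟩

lemma lvl_lt_of_lt {x y : T} (h : t.lt x y) : t.lvl x < t.lvl y := by
  apply Set.ncard_lt_ncard _ (t.predlt_finite y)
  rw [Set.ssubset_def]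
  constructor
  · intro p hp
    refine ⟨t.trans _ _ _ hp.1 h.1, ?_⟩
    rintro rfl
    exact h.2 (t.antisymm _ _ h.1 hp.1)
  · intro hsub
    exact (hsub (show x ∈ {p | t.lt p y} from h)).2 rfl

lemma lvl_le_of_le {x y : T} (h : t.le x y) : t.lvl x ≤ t.lvl y := by
  by_cases hxy : x = y
  · subst hxy; exact le_refl _
  · exact (t.lvl_lt_of_lt ⟨h, hxy⟩).le

lemma eq_of_le_of_lvl_le (x y : T) (h : t.le x y) (hl : t.lvl y ≤ t.lvl x) : x = y := by
  by_contra hxy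
  exact absurd hl (not_le.mpr (t.lvl_lt_of_lt ⟨h, hxy⟩))

lemma exists_pred_at_level : ∀ (n : ℕ) (x : T), t.lvl x = n → ∀ j ≤ n, ∃ w, t.le w x ∧ t.lvl w = j := by
  intro n
  induction n with
  | zero =>
    intro x hx j hj
    exact ⟨x, t.refl x, by omega⟩
  | succ n ih =>
    intro x hx j hj
    rcases eq_or_lt_of_le hj with rfl | hj'
    · exact ⟨x, t.refl x, hx⟩
    · have hne : {y | t.lt y x}.Nonempty := by
        rw [← Set.ncard_pos (t.predlt_finite x)]
        show 0 < t.lvl x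
        omega
      obtain ⟨m, hm, hmax⟩ := (t.predlt_finite x).exists_maximalFor t.lvl _ hne
      have hset : {y | t.lt y x} = insert m {y | t.lt y m} := by
        ext y
        simp only [Set.mem_insert_iff, Set.mem_setOf_eq]
        constructor
        · intro hy
          by_cases hym : y = m
          · exact Or.inl hym
          · rcases t.pred_chain x y m hy.1 hm.1 with h | h
            · exact Or.inr ⟨h, hym⟩
            · have hl := hmax hy (t.lvl_le_of_le h)
              exact Or.inl (t.eq_of_le_of_lvl_le m y h hl.ge).symm
        · rintro (rfl | hy)
          · exact hm
          · refine ⟨t.trans _ _ _ hy.1 hm.1, ?_⟩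
            rintro rfl
            exact hm.2 (t.antisymm _ _ hm.1 hy.1)
      have hcard : t.lvl x = t.lvl m + 1 := by
        rw [lvl, hset, Set.ncard_insert_of_notMem (fun h => h.2 rfl) (t.predlt_finite m)]
        rfl
      have hmn : t.lvl m = n := by omega
      obtain ⟨w, hw, hwl⟩ := ih m hmn j (by omega)
      exact ⟨w, t.trans _ _ _ hw hm.1, hwl⟩

end TreeOrder

lemma exists_ultralim {β : Type*} (U : Ultrafilter ℕ) {s : Set β} (hs : s.Finite) {a : ℕ → β}
    (h : {n | a n ∈ s} ∈ U) : ∃ v, {n | a n = v} ∈ U := by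
  have hsub : {n | a n ∈ s} ⊆ ⋃ v ∈ s, {n | a n = v} := fun n hn => Set.mem_biUnion hn rfl
  have hU : (⋃ v ∈ s, {n | a n = v}) ∈ U := Filter.mem_of_superset h hsub
  rcases (Ultrafilter.finite_biUnion_mem_iff hs).mp hU with ⟨v, -, hv⟩
  exact ⟨v, hv⟩

/-- König's Lemma via local embeddability: if the union of the first n levels
of T₁ embeds (level-preservingly, as a subtree) into that of T₂ for every n,
then T₁ embeds into T₂ as a subtree. -/
theorem stmt5 {T₁ T₂ : Type*} (t1 : TreeOrder T₁) (t2 : TreeOrder T₂)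
    (h1o : t1.OmegaLevels) (h1f : t1.FiniteLevels)
    (h2o : t2.OmegaLevels) (h2f : t2.FiniteLevels)
    (hloc : ∀ n, ∃ f : T₁ → T₂, Set.InjOn f (t1.below n) ∧
      (∀ x ∈ t1.below n, ∀ y ∈ t1.below n, (t1.le x y ↔ t2.le (f x) (f y))) ∧
      (∀ k, ∀ x ∈ t1.below n, x ∈ t1.level k → f x ∈ t2.level k)) :
    ∃ f : T₁ → T₂, Function.Injective f ∧
      (∀ x y : T₁, (t1.le x y ↔ t2.le (f x) (f y))) ∧
      (∀ k, ∀ x : T₁, x ∈ t1.level k → f x ∈ t2.level k) ∧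
      (∀ x : T₁, ∀ z : T₂, t2.le z (f x) → ∃ w : T₁, f w = z) := by
  classical
  choose F hinj hord hlev using hloc
  set U : Ultrafilter ℕ := Filter.hyperfilter ℕ with hUdef
  have hcof : ∀ k : ℕ, {n | k < n} ∈ U := by
    intro k
    apply Filter.mem_hyperfilter_of_finite_compl
    have hc : {n : ℕ | k < n}ᶜ = Set.Iic k := by
      ext n; simp [Set.mem_Iic]
    rw [hc]; exact Set.finite_Iic k
  have hbelow : ∀ (x : T₁) (n : ℕ), t1.lvl x < n → x ∈ t1.below n :=
    fun x n h => t1.mem_below_iff.mpr h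
  have hFlev : ∀ (x : T₁) (n : ℕ), t1.lvl x < n → F n x ∈ t2.level (t1.lvl x) :=
    fun x n h => hlev n _ x (hbelow x n h) (t1.mem_level_lvl x)
  have hex : ∀ x : T₁, ∃ v, {n | F n x = v} ∈ U := by
    intro x
    apply exists_ultralim U (h2f (t1.lvl x))
    exact Filter.mem_of_superset (hcof (t1.lvl x)) (fun n hn => hFlev x n hn)
  choose g hg using hex
  have key : ∀ x y : T₁, ∃ n, F n x = g x ∧ F n y = g y ∧ t1.lvl x < n ∧ t1.lvl y < n := by
    intro x y
    have hm : {n | F n x = g x} ∩ {n | F n y = g y} ∩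
        ({n | t1.lvl x < n} ∩ {n | t1.lvl y < n}) ∈ U :=
      Filter.inter_mem (Filter.inter_mem (hg x) (hg y))
        (Filter.inter_mem (hcof _) (hcof _))
    obtain ⟨n, hn⟩ := Filter.nonempty_of_mem hm
    exact ⟨n, hn.1.1, hn.1.2, hn.2.1, hn.2.2⟩
  have hordg : ∀ x y : T₁, t1.le x y ↔ t2.le (g x) (g y) := by
    intro x y
    obtain ⟨n, hx, hy, hxn, hyn⟩ := key x y
    rw [← hx, ← hy]
    exact hord n x (hbelow _ _ hxn) y (hbelow _ _ hyn)
  have hlevg : ∀ x : T₁, g x ∈ t2.level (t1.lvl x) := by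
    intro x
    obtain ⟨n, hx, -, hxn, -⟩ := key x x
    rw [← hx]; exact hFlev x n hxn
  refine ⟨g, ?_, hordg, ?_, ?_⟩
  · intro x y hxy
    exact t1.antisymm x y ((hordg x y).mpr (hxy ▸ t2.refl _))
      ((hordg y x).mpr (hxy ▸ t2.refl _))
  · intro k x hx
    rw [← t1.level_eq_lvl hx]
    exact hlevg x
  · intro x z hz
    have h1 : t2.lvl (g x) = t1.lvl x := t2.level_eq_lvl (hlevg x)
    have hlz : t2.lvl z ≤ t1.lvl x := by
      have := t2.lvl_le_of_le hz; omega
    obtain ⟨w, hwx, hwl⟩ := t1.exists_pred_at_level (t1.lvl x) x rfl (t2.lvl z) hlz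
    refine ⟨w, ?_⟩
    obtain ⟨n, hw, hx, hwn, hxn⟩ := key w x
    have hle1 : t2.le (F n w) (F n x) :=
      (hord n w (hbelow _ _ hwn) x (hbelow _ _ hxn)).mp hwx
    have hle2 : t2.le z (F n x) := by rw [hx]; exact hz
    have hlw : t2.lvl (F n w) = t2.lvl z := by
      have := t2.level_eq_lvl (hFlev w n hwn); omega
    have hfz : F n w = z := by
      rcases t2.pred_chain (F n x) (F n w) z hle1 hle2 with h | h
      · exact t2.eq_of_le_of_lvl_le _ _ h hlw.ge
      · exact (t2.eq_of_le_of_lvl_le _ _ h hlw.le).symm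
    rw [← hw, hfz]
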